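/- Let δ¹ > δ² > ... > δⁿ be reals in (0,1) and θ₀ ∈ ℝⁿ with each θ₀ⁱ > 0 and ∑ᵢ θ₀ⁱ = 1. Define β_t := ∑ᵢ θ₀ⁱ (δⁱ)^t. Then the key cross-difference identity holds: β_{t+τ}·β_{t'+τ'} − β_{t+τ'}·β_{t'+τ} = ∑_{i<j} θ₀ⁱθ₀ʲ (δⁱδʲ)^{t+τ} ((δⁱ)^{t'−t} − (δʲ)^{t'−t})((δⁱ)^{τ'−τ} − (δʲ)^{τ'−τ}) for all t ≤ t' and τ ≤ τ'. -/

import Mathlib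

open Finset

theorem stmt_1 (n : ℕ) (δ θ₀ : Fin n → ℝ)
    (hδ1 : ∀ i, 0 < δ i) (hδ2 : ∀ i, δ i < 1)
    (hδanti : ∀ i j : Fin n, i < j → δ j < δ i)
    (hθpos : ∀ i, 0 < θ₀ i) (hθsum : ∑ i, θ₀ i = 1)
    (β : ℕ → ℝ) (hβ : ∀ t, β t = ∑ i, θ₀ i * (δ i) ^ t) :
    ∀ t t' τ τ' : ℕ, t ≤ t' → τ ≤ τ' →
      β (t + τ) * β (t' + τ') - β (t + τ') * β (t' + τ) =
        ∑ p ∈ Finset.univ.filter (fun p : Fin n × Fin n => p.1 < p.2),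
          θ₀ p.1 * θ₀ p.2 * (δ p.1 * δ p.2) ^ (t + τ) *
            ((δ p.1) ^ (t' - t) - (δ p.2) ^ (t' - t)) *
            ((δ p.1) ^ (τ' - τ) - (δ p.2) ^ (τ' - τ)) := by
  intro t t' τ τ' ht hτ
  obtain ⟨a, rfl⟩ := Nat.exists_eq_add_of_le ht
  obtain ⟨b, rfl⟩ := Nat.exists_eq_add_of_le hτ
  simp only [hβ, Nat.add_sub_cancel_left]
  set f : Fin n × Fin n → ℝ := fun p =>
    θ₀ p.1 * δ p.1 ^ (t + τ) * (θ₀ p.2 * δ p.2 ^ (t + a + (τ + b))) -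
    θ₀ p.1 * δ p.1 ^ (t + (τ + b)) * (θ₀ p.2 * δ p.2 ^ (t + a + τ)) with hf
  have expand :
      (∑ i, θ₀ i * δ i ^ (t + τ)) * (∑ i, θ₀ i * δ i ^ (t + a + (τ + b))) -
      (∑ i, θ₀ i * δ i ^ (t + (τ + b))) * (∑ i, θ₀ i * δ i ^ (t + a + τ)) =
      ∑ p : Fin n × Fin n, f p := by
    rw [Fintype.sum_prod_type, Finset.sum_mul_sum, Finset.sum_mul_sum,
      ← Finset.sum_sub_distrib]
    exact Finset.sum_congr rfl fun i _ => (Finset.sum_sub_distrib _ _).symm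
  rw [expand]
  have hsplit : (Finset.univ : Finset (Fin n × Fin n)) =
      (Finset.univ.filter (fun p : Fin n × Fin n => p.1 < p.2)) ∪
      (Finset.univ.filter (fun p : Fin n × Fin n => p.2 ≤ p.1)) := by
    ext p
    simp only [Finset.mem_union, Finset.mem_filter, Finset.mem_univ, true_and]
    constructor
    · intro _; exact (lt_or_ge p.1 p.2).imp id id
    · intro _; trivial
  have hdisj : Disjoint (Finset.univ.filter (fun p : Fin n × Fin n => p.1 < p.2))
      (Finset.univ.filter (fun p : Fin n × Fin n => p.2 ≤ p.1)) := by
    rw [Finset.disjoint_left]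
    intro p hp hq
    simp only [Finset.mem_filter, Finset.mem_univ, true_and] at hp hq
    exact absurd hq (not_le.mpr hp)
  conv_lhs => rw [hsplit, Finset.sum_union hdisj]
  -- diagonal terms vanish; fold the ≤ triangle onto the < triangle
  have hdiag : ∀ i : Fin n, f (i, i) = 0 := by
    intro i; simp only [hf]; ring
  have hle : (∑ p ∈ Finset.univ.filter (fun p : Fin n × Fin n => p.2 ≤ p.1), f p) =
      ∑ p ∈ Finset.univ.filter (fun p : Fin n × Fin n => p.1 < p.2), f p.swap := by
    rw [← Finset.sum_filter_add_sum_filter_not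
      (Finset.univ.filter (fun p : Fin n × Fin n => p.2 ≤ p.1))
      (fun p : Fin n × Fin n => p.2 = p.1)]
    have h1 : (∑ p ∈ (Finset.univ.filter (fun p : Fin n × Fin n => p.2 ≤ p.1)).filter
        (fun p => p.2 = p.1), f p) = 0 := by
      apply Finset.sum_eq_zero
      intro p hp
      simp only [Finset.mem_filter, Finset.mem_univ, true_and] at hp
      obtain ⟨i, j⟩ := p
      obtain ⟨-, h2⟩ := hp
      cases h2
      exact hdiag i
    rw [h1, zero_add]
    apply Finset.sum_nbij' (fun p => Prod.swap p) (fun p => Prod.swap p)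
    · intro p hp
      simp only [Finset.mem_filter, Finset.mem_univ, true_and, Prod.fst_swap,
        Prod.snd_swap] at *
      exact hp.1.lt_of_ne hp.2
    · intro p hp
      simp only [Finset.mem_filter, Finset.mem_univ, true_and, Prod.fst_swap,
        Prod.snd_swap] at *
      exact ⟨le_of_lt hp, ne_of_lt hp⟩
    · intro p _; exact Prod.swap_swap p
    · intro p _; exact Prod.swap_swap p
    · intro p _; rfl
  rw [hle, ← Finset.sum_add_distrib]
  apply Finset.sum_congr rfl
  intro p hp
  simp only [hf, Prod.fst_swap, Prod.snd_swap]
  ring
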